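/- Let K be a field. Then the algebra R(E₆) = K⟨x,y⟩/(x², y³, (x+y)³) has dimension 12 as a K-vector space. -/

import Mathlib

noncomputable section

/-- The relations `x² = 0`, `y³ = 0`, `(x+y)³ = 0` on `K⟨x,y⟩`, with `x = ι 0`, `y = ι 1`. -/
inductive Rel6 (K : Type*) [CommRing K] :
    FreeAlgebra K (Fin 2) → FreeAlgebra K (Fin 2) → Prop
  | xx : Rel6 K (FreeAlgebra.ι K 0 * FreeAlgebra.ι K 0) 0
  | yyy : Rel6 K (FreeAlgebra.ι K 1 * (FreeAlgebra.ι K 1 * FreeAlgebra.ι K 1)) 0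
  | pow : Rel6 K ((FreeAlgebra.ι K 0 + FreeAlgebra.ι K 1) ^ 3) 0

/-- The algebra `R(E₆) = K⟨x,y⟩/(x², y³, (x+y)³)`. -/
abbrev RE6 (K : Type*) [CommRing K] := RingQuot (Rel6 K)

/-- The image of `x` in `R(E₆)`. -/
def e6x (K : Type*) [CommRing K] : RE6 K :=
  RingQuot.mkRingHom (Rel6 K) (FreeAlgebra.ι K 0)

/-- The image of `y` in `R(E₆)`. -/
def e6y (K : Type*) [CommRing K] : RE6 K :=
  RingQuot.mkRingHom (Rel6 K) (FreeAlgebra.ι K 1)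

section GenericIdentities

variable {R : Type*} [Ring R] {x y : R}

lemma e6hsum (hx2 : x * x = 0) (hy3 : y * (y * y) = 0) (hp : (x + y) ^ 3 = 0) :
    x * (y * x) + (x * (y * y) + (y * (x * y) + y * (y * x))) = 0 := by
  have hxx0 : ∀ t : R, x * (x * t) = 0 := fun t => by rw [← mul_assoc, hx2, zero_mul]
  have hyxx : y * (x * x) = 0 := by rw [hx2, mul_zero]
  rw [← hp]
  rw [show (x + y) ^ 3 = (x + y) * ((x + y) * (x + y)) by
    rw [pow_succ, pow_succ, pow_one, mul_assoc]]
  simp only [mul_add, add_mul, mul_assoc, hxx0, hyxx, hy3, mul_zero, zero_add, add_zero]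
  abel

lemma e6h1 (hx2 : x * x = 0) (hy3 : y * (y * y) = 0) (hp : (x + y) ^ 3 = 0) :
    y * (y * x) = -(x * (y * x) + (x * (y * y) + y * (x * y))) := by
  rw [eq_neg_iff_add_eq_zero, ← e6hsum hx2 hy3 hp]
  abel

lemma e6h3 (hx2 : x * x = 0) (hy3 : y * (y * y) = 0) (hp : (x + y) ^ 3 = 0) :
    y * (y * (x * y)) = -(x * (y * (x * y)) + y * (x * (y * y))) := by
  have e1 : y * (y * (x * y)) = (y * (y * x)) * y := by simp [mul_assoc]
  rw [e1, e6h1 hx2 hy3 hp, neg_mul, add_mul, add_mul]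
  simp [mul_assoc, hy3]

lemma e6h2 (hx2 : x * x = 0) (hy3 : y * (y * y) = 0) (hp : (x + y) ^ 3 = 0) :
    y * (x * (y * x)) = x * (y * (x * y)) := by
  have h1 := e6h1 hx2 hy3 hp
  have h3 := e6h3 hx2 hy3 hp
  have z : y * (y * (y * x)) = 0 := by
    have e1 : y * (y * (y * x)) = (y * (y * y)) * x := by simp [mul_assoc]
    rw [e1, hy3, zero_mul]
  have z2 : y * (y * (y * x)) =
      -(y * (x * (y * x)) + (y * (x * (y * y)) + y * (y * (x * y)))) := by
    rw [h1, mul_neg, mul_add, mul_add]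
  have z3 : y * (x * (y * x)) + (y * (x * (y * y)) + y * (y * (x * y))) = 0 := by
    have := z2
    rw [z] at this
    exact (neg_eq_zero.mp this.symm)
  rw [h3] at z3
  rw [← sub_eq_zero]
  calc y * (x * (y * x)) - x * (y * (x * y))
      = y * (x * (y * x)) +
        (y * (x * (y * y)) + -(x * (y * (x * y)) + y * (x * (y * y)))) := by abel
    _ = 0 := z3

lemma e6h4 (hx2 : x * x = 0) (hy3 : y * (y * y) = 0) (hp : (x + y) ^ 3 = 0) :
    y * (x * (y * (x * y))) = x * (y * (x * (y * y))) := by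
  have e1 : y * (x * (y * (x * y))) = (y * (x * (y * x))) * y := by simp [mul_assoc]
  rw [e1, e6h2 hx2 hy3 hp]
  simp [mul_assoc]

lemma e6h5 (hx2 : x * x = 0) (hy3 : y * (y * y) = 0) (hp : (x + y) ^ 3 = 0) :
    y * (y * (x * (y * y))) = -(x * (y * (x * (y * y)))) := by
  have e1 : y * (y * (x * (y * y))) = (y * (y * (x * y))) * y := by simp [mul_assoc]
  rw [e1, e6h3 hx2 hy3 hp, neg_mul, add_mul]
  simp [mul_assoc, hy3]

lemma e6h6 (hx2 : x * x = 0) (hy3 : y * (y * y) = 0) (hp : (x + y) ^ 3 = 0) :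
    y * (x * (y * (x * (y * y)))) = 0 := by
  have e1 : y * (x * (y * (x * (y * y)))) = (y * (x * (y * x))) * (y * y) := by
    simp [mul_assoc]
  rw [e1, e6h2 hx2 hy3 hp]
  simp [mul_assoc, hy3]

end GenericIdentities

/-- Left multiplication by `x` in the regular representation, over `ℤ`. -/
def LxZ : Matrix (Fin 12) (Fin 12) ℤ := Matrix.of fun i j =>
  if ((i : ℕ), (j : ℕ)) ∈ [(1,0),(3,2),(6,4),(7,5),(9,8),(11,10)] then 1 else 0

/-- Left multiplication by `y` in the regular representation, over `ℤ`. -/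
def LyZ : Matrix (Fin 12) (Fin 12) ℤ := Matrix.of fun i j =>
  if ((i : ℕ), (j : ℕ)) ∈ [(2,0),(4,1),(5,2),(8,3),(9,6),(10,7),(11,9)] then 1
  else if ((i : ℕ), (j : ℕ)) ∈ [(6,4),(7,4),(8,4),(9,8),(10,8),(11,10)] then -1 else 0

lemma LxZ_sq : LxZ * LxZ = 0 := by decide

lemma LyZ_cube : LyZ * (LyZ * LyZ) = 0 := by decide

lemma LZ_pow : (LxZ + LyZ) ^ 3 = 0 := by
  rw [pow_succ, pow_succ, pow_one]
  decide

/-- The twelve word matrices. -/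
def WZ : Fin 12 → Matrix (Fin 12) (Fin 12) ℤ :=
  ![1, LxZ, LyZ, LxZ * LyZ, LyZ * LxZ, LyZ * LyZ, LxZ * (LyZ * LxZ), LxZ * (LyZ * LyZ),
    LyZ * (LxZ * LyZ), LxZ * (LyZ * (LxZ * LyZ)), LyZ * (LxZ * (LyZ * LyZ)),
    LxZ * (LyZ * (LxZ * (LyZ * LyZ)))]

lemma WZ_col : ∀ j i : Fin 12, WZ j i 0 = if i = j then 1 else 0 := by decide

/-- For a field `K`, the algebra `R(E₆) = K⟨x,y⟩/(x², y³, (x+y)³)` has dimension `12`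
as a `K`-vector space. -/
theorem e6_finrank_eq_twelve (K : Type*) [Field K] :
    Module.finrank K (RE6 K) = 12 := by
  set x := e6x K with hxdef
  set y := e6y K with hydef
  -- the basic relations in the quotient
  have hx2 : x * x = 0 := by
    rw [hxdef, e6x, ← map_mul, RingQuot.mkRingHom_rel Rel6.xx, map_zero]
  have hy3 : y * (y * y) = 0 := by
    rw [hydef, e6y, ← map_mul, ← map_mul, RingQuot.mkRingHom_rel Rel6.yyy, map_zero]
  have hp : (x + y) ^ 3 = 0 := by
    rw [hxdef, hydef, e6x, e6y, ← map_add, ← map_pow, RingQuot.mkRingHom_rel Rel6.pow, map_zero]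
  have hxx0 : ∀ t : RE6 K, x * (x * t) = 0 := fun t => by rw [← mul_assoc, hx2, zero_mul]
  have h1 : y * (y * x) = -(x * (y * x) + (x * (y * y) + y * (x * y))) := e6h1 hx2 hy3 hp
  have h2 : y * (x * (y * x)) = x * (y * (x * y)) := e6h2 hx2 hy3 hp
  have h3 : y * (y * (x * y)) = -(x * (y * (x * y)) + y * (x * (y * y))) := e6h3 hx2 hy3 hp
  have h4 : y * (x * (y * (x * y))) = x * (y * (x * (y * y))) := e6h4 hx2 hy3 hp
  have h5 : y * (y * (x * (y * y))) = -(x * (y * (x * (y * y)))) := e6h5 hx2 hy3 hp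
  have h6 : y * (x * (y * (x * (y * y)))) = 0 := e6h6 hx2 hy3 hp
  -- the twelve monomials
  let v : Fin 12 → RE6 K :=
    ![1, x, y, x * y, y * x, y * y, x * (y * x), x * (y * y), y * (x * y),
      x * (y * (x * y)), y * (x * (y * y)), x * (y * (x * (y * y)))]
  set T : Set (RE6 K) :=
    {1, x, y, x * y, y * x, y * y, x * (y * x), x * (y * y), y * (x * y),
      x * (y * (x * y)), y * (x * (y * y)), x * (y * (x * (y * y)))} with hTdef
  have hrange : Set.range v = T := by
    ext a
    simp only [hTdef, v, Matrix.range_cons, Matrix.range_empty, Set.union_empty,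
      Set.mem_insert_iff, Set.mem_singleton_iff, Set.mem_union, Set.mem_range]
  set S : Submodule K (RE6 K) := Submodule.span K T with hSdef
  have hv0 : (1 : RE6 K) ∈ S := Submodule.subset_span (Set.mem_insert _ _)
  have hv1 : x ∈ S := Submodule.subset_span (Set.mem_insert_of_mem _ (Set.mem_insert _ _))
  have hv2 : y ∈ S := Submodule.subset_span (Set.mem_insert_of_mem _ (Set.mem_insert_of_mem _ (Set.mem_insert _ _)))
  have hv3 : x * y ∈ S := Submodule.subset_span (Set.mem_insert_of_mem _ (Set.mem_insert_of_mem _ (Set.mem_insert_of_mem _ (Set.mem_insert _ _))))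
  have hv4 : y * x ∈ S := Submodule.subset_span (Set.mem_insert_of_mem _ (Set.mem_insert_of_mem _ (Set.mem_insert_of_mem _ (Set.mem_insert_of_mem _ (Set.mem_insert _ _)))))
  have hv5 : y * y ∈ S := Submodule.subset_span (Set.mem_insert_of_mem _ (Set.mem_insert_of_mem _ (Set.mem_insert_of_mem _ (Set.mem_insert_of_mem _ (Set.mem_insert_of_mem _ (Set.mem_insert _ _))))))
  have hv6 : x * (y * x) ∈ S := Submodule.subset_span (Set.mem_insert_of_mem _ (Set.mem_insert_of_mem _ (Set.mem_insert_of_mem _ (Set.mem_insert_of_mem _ (Set.mem_insert_of_mem _ (Set.mem_insert_of_mem _ (Set.mem_insert _ _)))))))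
  have hv7 : x * (y * y) ∈ S := Submodule.subset_span (Set.mem_insert_of_mem _ (Set.mem_insert_of_mem _ (Set.mem_insert_of_mem _ (Set.mem_insert_of_mem _ (Set.mem_insert_of_mem _ (Set.mem_insert_of_mem _ (Set.mem_insert_of_mem _ (Set.mem_insert _ _))))))))
  have hv8 : y * (x * y) ∈ S := Submodule.subset_span (Set.mem_insert_of_mem _ (Set.mem_insert_of_mem _ (Set.mem_insert_of_mem _ (Set.mem_insert_of_mem _ (Set.mem_insert_of_mem _ (Set.mem_insert_of_mem _ (Set.mem_insert_of_mem _ (Set.mem_insert_of_mem _ (Set.mem_insert _ _)))))))))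
  have hv9 : x * (y * (x * y)) ∈ S := Submodule.subset_span (Set.mem_insert_of_mem _ (Set.mem_insert_of_mem _ (Set.mem_insert_of_mem _ (Set.mem_insert_of_mem _ (Set.mem_insert_of_mem _ (Set.mem_insert_of_mem _ (Set.mem_insert_of_mem _ (Set.mem_insert_of_mem _ (Set.mem_insert_of_mem _ (Set.mem_insert _ _))))))))))
  have hv10 : y * (x * (y * y)) ∈ S := Submodule.subset_span (Set.mem_insert_of_mem _ (Set.mem_insert_of_mem _ (Set.mem_insert_of_mem _ (Set.mem_insert_of_mem _ (Set.mem_insert_of_mem _ (Set.mem_insert_of_mem _ (Set.mem_insert_of_mem _ (Set.mem_insert_of_mem _ (Set.mem_insert_of_mem _ (Set.mem_insert_of_mem _ (Set.mem_insert _ _)))))))))))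
  have hv11 : x * (y * (x * (y * y))) ∈ S := Submodule.subset_span (Set.mem_insert_of_mem _ (Set.mem_insert_of_mem _ (Set.mem_insert_of_mem _ (Set.mem_insert_of_mem _ (Set.mem_insert_of_mem _ (Set.mem_insert_of_mem _ (Set.mem_insert_of_mem _ (Set.mem_insert_of_mem _ (Set.mem_insert_of_mem _ (Set.mem_insert_of_mem _ (Set.mem_insert_of_mem _ (Set.mem_singleton _))))))))))))
  -- S is stable under left multiplication by x and y
  have hxS : ∀ s ∈ S, x * s ∈ S := by
    intro s hs
    induction hs using Submodule.span_induction with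
    | mem a ha =>
      simp only [hTdef, Set.mem_insert_iff, Set.mem_singleton_iff] at ha
      rcases ha with rfl | rfl | rfl | rfl | rfl | rfl | rfl | rfl | rfl | rfl | rfl | rfl
      · rw [mul_one]; exact hv1
      · rw [hx2]; exact S.zero_mem
      · exact hv3
      · rw [← mul_assoc, hx2, zero_mul]; exact S.zero_mem
      · exact hv6
      · exact hv7
      · rw [hxx0]; exact S.zero_mem
      · rw [hxx0]; exact S.zero_mem
      · exact hv9
      · rw [hxx0]; exact S.zero_mem
      · exact hv11
      · rw [hxx0]; exact S.zero_mem
    | zero => rw [mul_zero]; exact S.zero_mem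
    | add a b _ _ ha hb => rw [mul_add]; exact S.add_mem ha hb
    | smul c a _ ha => rw [mul_smul_comm]; exact S.smul_mem c ha
  have hyS : ∀ s ∈ S, y * s ∈ S := by
    intro s hs
    induction hs using Submodule.span_induction with
    | mem a ha =>
      simp only [hTdef, Set.mem_insert_iff, Set.mem_singleton_iff] at ha
      rcases ha with rfl | rfl | rfl | rfl | rfl | rfl | rfl | rfl | rfl | rfl | rfl | rfl
      · rw [mul_one]; exact hv2
      · exact hv4
      · exact hv5
      · exact hv8
      · rw [h1]; exact S.neg_mem (S.add_mem hv6 (S.add_mem hv7 hv8))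
      · rw [hy3]; exact S.zero_mem
      · rw [h2]; exact hv9
      · exact hv10
      · rw [h3]; exact S.neg_mem (S.add_mem hv9 hv10)
      · rw [h4]; exact hv11
      · rw [h5]; exact S.neg_mem hv11
      · rw [h6]; exact S.zero_mem
    | zero => rw [mul_zero]; exact S.zero_mem
    | add a b _ _ ha hb => rw [mul_add]; exact S.add_mem ha hb
    | smul c a _ ha => rw [mul_smul_comm]; exact S.smul_mem c ha
  -- S is stable under multiplication
  have hmulS : ∀ s ∈ S, ∀ t ∈ S, s * t ∈ S := by
    intro s hs
    induction hs using Submodule.span_induction with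
    | mem a ha =>
      simp only [hTdef, Set.mem_insert_iff, Set.mem_singleton_iff] at ha
      intro t ht
      rcases ha with rfl | rfl | rfl | rfl | rfl | rfl | rfl | rfl | rfl | rfl | rfl | rfl
      · rw [one_mul]; exact ht
      · exact hxS t ht
      · exact hyS t ht
      · rw [mul_assoc]; exact hxS _ (hyS t ht)
      · rw [mul_assoc]; exact hyS _ (hxS t ht)
      · rw [mul_assoc]; exact hyS _ (hyS t ht)
      · rw [mul_assoc, mul_assoc]; exact hxS _ (hyS _ (hxS t ht))
      · rw [mul_assoc, mul_assoc]; exact hxS _ (hyS _ (hyS t ht))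
      · rw [mul_assoc, mul_assoc]; exact hyS _ (hxS _ (hyS t ht))
      · rw [mul_assoc, mul_assoc, mul_assoc]; exact hxS _ (hyS _ (hxS _ (hyS t ht)))
      · rw [mul_assoc, mul_assoc, mul_assoc]; exact hyS _ (hxS _ (hyS _ (hyS t ht)))
      · rw [mul_assoc, mul_assoc, mul_assoc, mul_assoc]
        exact hxS _ (hyS _ (hxS _ (hyS _ (hyS t ht))))
    | zero => intro t ht; rw [zero_mul]; exact S.zero_mem
    | add a b _ _ ha hb => intro t ht; rw [add_mul]; exact S.add_mem (ha t ht) (hb t ht)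
    | smul c a _ ha => intro t ht; rw [smul_mul_assoc]; exact S.smul_mem c (ha t ht)
  -- spanning : S = ⊤
  have hmk : ∀ a : FreeAlgebra K (Fin 2),
      RingQuot.mkAlgHom K (Rel6 K) a = RingQuot.mkRingHom (Rel6 K) a := fun a => by
    rw [← RingQuot.mkAlgHom_coe K (Rel6 K)]; rfl
  have hStop : S = ⊤ := by
    rw [eq_top_iff]
    rintro a -
    obtain ⟨p, rfl⟩ := RingQuot.mkAlgHom_surjective K (Rel6 K) a
    induction p using FreeAlgebra.induction with
    | grade0 r =>
      rw [AlgHom.commutes, Algebra.algebraMap_eq_smul_one]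
      exact S.smul_mem r hv0
    | grade1 i =>
      fin_cases i
      · show RingQuot.mkAlgHom K (Rel6 K) (FreeAlgebra.ι K 0) ∈ S
        rw [hmk]; exact hv1
      · show RingQuot.mkAlgHom K (Rel6 K) (FreeAlgebra.ι K 1) ∈ S
        rw [hmk]; exact hv2
    | mul a b ha hb =>
      rw [map_mul]
      exact hmulS _ ha _ hb
    | add a b ha hb =>
      rw [map_add]
      exact S.add_mem ha hb
  -- the representation on K^12
  let c : ℤ →+* K := Int.castRingHom K
  let f : FreeAlgebra K (Fin 2) →ₐ[K] Matrix (Fin 12) (Fin 12) K :=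
    FreeAlgebra.lift K ![c.mapMatrix LxZ, c.mapMatrix LyZ]
  have hf0 : f (FreeAlgebra.ι K 0) = c.mapMatrix LxZ := by simp [f]
  have hf1 : f (FreeAlgebra.ι K 1) = c.mapMatrix LyZ := by simp [f]
  have hfrel : ∀ ⦃a b⦄, Rel6 K a b → f a = f b := by
    rintro a b (_ | _ | _)
    · rw [map_mul, hf0, map_zero, ← map_mul, LxZ_sq, map_zero]
    · rw [map_mul, map_mul, hf1, map_zero, ← map_mul, ← map_mul, LyZ_cube, map_zero]
    · rw [map_pow, map_add, hf0, hf1, map_zero, ← map_add, ← map_pow, LZ_pow, map_zero]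
  let φ : RE6 K →ₐ[K] Matrix (Fin 12) (Fin 12) K := RingQuot.liftAlgHom K ⟨f, hfrel⟩
  have hφx : φ x = c.mapMatrix LxZ := by
    rw [hxdef, e6x, ← hmk, RingQuot.liftAlgHom_mkAlgHom_apply, hf0]
  have hφy : φ y = c.mapMatrix LyZ := by
    rw [hydef, e6y, ← hmk, RingQuot.liftAlgHom_mkAlgHom_apply, hf1]
  -- the linear map reading off the first column of the representation
  let ψ : RE6 K →ₗ[K] (Fin 12 → K) :=
    { toFun := fun a i => φ a i 0
      map_add' := fun a b => by funext i; simp [Matrix.add_apply]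
      map_smul' := fun r a => by funext i; simp [Matrix.smul_apply] }
  have key : ∀ (a : RE6 K) (M : Matrix (Fin 12) (Fin 12) ℤ) (j : Fin 12),
      φ a = c.mapMatrix M → (∀ i, M i 0 = if i = j then 1 else 0) →
      ψ a = Pi.single j 1 := by
    intro a M j hM h
    funext i
    show φ a i 0 = _
    rw [hM, RingHom.mapMatrix_apply, Matrix.map_apply, h i]
    simp [Pi.single_apply, apply_ite (Int.cast : ℤ → K), c]
  have e0 : ψ (1 : RE6 K) = Pi.single (0 : Fin 12) 1 :=
    key 1 1 0 (by rw [map_one, map_one]) (fun i => WZ_col 0 i)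
  have e1 : ψ x = Pi.single (1 : Fin 12) 1 :=
    key x LxZ 1 hφx (fun i => WZ_col 1 i)
  have e2 : ψ y = Pi.single (2 : Fin 12) 1 :=
    key y LyZ 2 hφy (fun i => WZ_col 2 i)
  have e3 : ψ (x * y) = Pi.single (3 : Fin 12) 1 :=
    key _ (LxZ * LyZ) 3 (by simp only [map_mul, hφx, hφy]) (fun i => WZ_col 3 i)
  have e4 : ψ (y * x) = Pi.single (4 : Fin 12) 1 :=
    key _ (LyZ * LxZ) 4 (by simp only [map_mul, hφx, hφy]) (fun i => WZ_col 4 i)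
  have e5 : ψ (y * y) = Pi.single (5 : Fin 12) 1 :=
    key _ (LyZ * LyZ) 5 (by simp only [map_mul, hφx, hφy]) (fun i => WZ_col 5 i)
  have e6 : ψ (x * (y * x)) = Pi.single (6 : Fin 12) 1 :=
    key _ (LxZ * (LyZ * LxZ)) 6 (by simp only [map_mul, hφx, hφy]) (fun i => WZ_col 6 i)
  have e7 : ψ (x * (y * y)) = Pi.single (7 : Fin 12) 1 :=
    key _ (LxZ * (LyZ * LyZ)) 7 (by simp only [map_mul, hφx, hφy]) (fun i => WZ_col 7 i)
  have e8 : ψ (y * (x * y)) = Pi.single (8 : Fin 12) 1 :=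
    key _ (LyZ * (LxZ * LyZ)) 8 (by simp only [map_mul, hφx, hφy]) (fun i => WZ_col 8 i)
  have e9 : ψ (x * (y * (x * y))) = Pi.single (9 : Fin 12) 1 :=
    key _ (LxZ * (LyZ * (LxZ * LyZ))) 9 (by simp only [map_mul, hφx, hφy])
      (fun i => WZ_col 9 i)
  have e10 : ψ (y * (x * (y * y))) = Pi.single (10 : Fin 12) 1 :=
    key _ (LyZ * (LxZ * (LyZ * LyZ))) 10 (by simp only [map_mul, hφx, hφy])
      (fun i => WZ_col 10 i)
  have e11 : ψ (x * (y * (x * (y * y)))) = Pi.single (11 : Fin 12) 1 :=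
    key _ (LxZ * (LyZ * (LxZ * (LyZ * LyZ)))) 11 (by simp only [map_mul, hφx, hφy])
      (fun i => WZ_col 11 i)
  have hψv : ∀ j : Fin 12, ψ (v j) = Pi.single j 1 := by
    intro j
    fin_cases j
    exacts [e0, e1, e2, e3, e4, e5, e6, e7, e8, e9, e10, e11]
  have hindep : LinearIndependent K v := by
    apply LinearIndependent.of_comp ψ
    have hc : (ψ ∘ v) = fun j => Pi.single j (1 : K) := by
      funext j; exact hψv j
    rw [hc]
    have := (Pi.basisFun K (Fin 12)).linearIndependent
    convert this using 1
    funext j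
    simp [Pi.basisFun_apply]
  have hspan : ⊤ ≤ Submodule.span K (Set.range v) := by
    rw [hrange]
    exact le_of_eq hStop.symm
  let B : Module.Basis (Fin 12) K (RE6 K) := Module.Basis.mk hindep hspan
  rw [Module.finrank_eq_card_basis B, Fintype.card_fin]

end
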